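/- Let M, N, N_e be positive integers and σ₂², σ₃² > 0. For i = 1,…,M let W^{2,i} be a random N_e×N Gaussian matrix with entry variance σ₂² and W^{3,i} a random N×N_e Gaussian matrix with entry variance σ₃², with all 2M matrices jointly independent; let φ₁,…,φ_M be fixed real gating weights and v ∈ ℝ^N a fixed vector. Then the cross-expert aggregate A := (1/M) Σ_{i=1}^M φ_i W^{3,i} W^{2,i} v satisfies E[‖A‖₂²] = (1/M²) (Σ_{i=1}^M φ_i²) σ₂² σ₃² N N_e ‖v‖₂². In particular, under the MSSP Regime II scaling σ₂² = 1/N and σ₃² = M/N_e, this equals ((1/M) Σ_{i=1}^M φ_i²) ‖v‖₂², so the √M amplification of the expert-output initialization exactly compensates the 1/√M cross-expert central-limit cancellation. (Exact moment computation behind the cross-expert CLT of Mechanism A and the boost-and-cancel mechanism of MSSP in Regime II.) -/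

import Mathlib

open MeasureTheory ProbabilityTheory Matrix
open scoped NNReal

section Aux
open Real Filter
open scoped ENNReal

lemma mom1 {b : ℝ} (hb : 0 < b) : ∫ x : ℝ, x * Real.exp (-(b * x ^ 2)) = 0 := by
  have h := MeasureTheory.integral_neg_eq_self (fun x : ℝ => x * Real.exp (-(b * x ^ 2))) volume
  simp only [neg_neg, neg_sq, neg_mul] at h
  have h2 : ∫ x : ℝ, x * Real.exp (-(b * x ^ 2)) = - ∫ x : ℝ, x * Real.exp (-(b * x ^ 2)) := by
    rw [← integral_neg]; exact h.symm
  linarith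

lemma int_sq_exp {b : ℝ} (hb : 0 < b) :
    Integrable (fun x : ℝ => x ^ 2 * Real.exp (-(b * x ^ 2))) := by
  have := integrable_rpow_mul_exp_neg_mul_sq hb (s := 2) (by norm_num)
  simpa [Real.rpow_natCast, neg_mul] using this

lemma mom2 {b : ℝ} (hb : 0 < b) :
    ∫ x : ℝ, x ^ 2 * Real.exp (-(b * x ^ 2)) = Real.sqrt (π / b) / (2 * b) := by
  have hderiv : ∀ x : ℝ, HasDerivAt (fun x : ℝ => x * Real.exp (-(b * x ^ 2)))
      (Real.exp (-(b * x ^ 2)) - 2 * b * (x ^ 2 * Real.exp (-(b * x ^ 2)))) x := by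
    intro x
    have h1 : HasDerivAt (fun x : ℝ => -(b * x ^ 2)) (-(b * (2 * x))) x := by
      have := ((hasDerivAt_pow 2 x).const_mul b).neg
      exact this.congr_deriv (by norm_num <;> ring)
    have h2 := (h1.exp)
    have h3 := (hasDerivAt_id x).mul h2
    refine h3.congr_deriv ?_
    simp only [id_eq]
    ring
  have hint : Integrable (fun x : ℝ =>
      Real.exp (-(b * x ^ 2)) - 2 * b * (x ^ 2 * Real.exp (-(b * x ^ 2)))) := by
    have h1 : Integrable (fun x : ℝ => Real.exp (-(b * x ^ 2))) := by
      simpa [neg_mul] using integrable_exp_neg_mul_sq hb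
    exact h1.sub ((int_sq_exp hb).const_mul _)
  have hf : Integrable (fun x : ℝ => x * Real.exp (-(b * x ^ 2))) := by
    simpa [neg_mul] using integrable_mul_exp_neg_mul_sq hb
  have h0 := integral_eq_zero_of_hasDerivAt_of_integrable hderiv hint hf
  rw [integral_sub (by simpa [neg_mul] using integrable_exp_neg_mul_sq hb)
    ((int_sq_exp hb).const_mul _)] at h0
  have hg : ∫ x : ℝ, Real.exp (-(b * x ^ 2)) = Real.sqrt (π / b) := by
    simpa [neg_mul] using integral_gaussian b
  rw [integral_const_mul] at h0
  rw [hg] at h0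
  field_simp at h0 ⊢
  linarith

lemma gpdf_eq {σ : ℝ≥0} (x : ℝ) :
    gaussianPDFReal 0 σ x = (Real.sqrt (2 * π * σ))⁻¹ * Real.exp (-((2 * (σ:ℝ))⁻¹ * x ^ 2)) := by
  rw [gaussianPDFReal]
  ring_nf

open scoped ENNReal

lemma pdf_fun_eq {σ : ℝ≥0} (g : ℝ → ℝ) :
    (fun x => gaussianPDFReal 0 σ x * g x)
      = fun x => (Real.sqrt (2 * π * σ))⁻¹ * (g x * Real.exp (-((2 * (σ:ℝ))⁻¹ * x ^ 2))) := by
  funext x; rw [gpdf_eq]; ring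

lemma gauss_int {σ : ℝ≥0} (hσ : σ ≠ 0) (g : ℝ → ℝ) :
    ∫ x, g x ∂(gaussianReal 0 σ) = ∫ x, gaussianPDFReal 0 σ x * g x := by
  rw [gaussianReal_of_var_ne_zero 0 hσ]
  have hd : (gaussianPDF 0 σ) = fun x => (((gaussianPDFReal 0 σ x).toNNReal : ℝ≥0) : ℝ≥0∞) := by
    funext x; rw [gaussianPDF_def]; rfl
  rw [hd, integral_withDensity_eq_integral_smul
    ((stronglyMeasurable_gaussianPDFReal 0 σ).measurable.real_toNNReal) g]
  congr 1; funext x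
  simp [NNReal.smul_def, Real.coe_toNNReal _ (gaussianPDFReal_nonneg 0 σ x)]

lemma gauss_integrable {σ : ℝ≥0} (hσ : σ ≠ 0) (g : ℝ → ℝ)
    (h : Integrable (fun x => gaussianPDFReal 0 σ x * g x)) :
    Integrable g (gaussianReal 0 σ) := by
  rw [gaussianReal_of_var_ne_zero 0 hσ]
  have hd : (gaussianPDF 0 σ) = fun x => (((gaussianPDFReal 0 σ x).toNNReal : ℝ≥0) : ℝ≥0∞) := by
    funext x; rw [gaussianPDF_def]; rfl
  rw [hd, integrable_withDensity_iff_integrable_smul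
    ((stronglyMeasurable_gaussianPDFReal 0 σ).measurable.real_toNNReal)]
  have he : (fun x => (((gaussianPDFReal 0 σ x).toNNReal : ℝ≥0)) • g x)
      = fun x => gaussianPDFReal 0 σ x * g x := by
    funext x
    simp [NNReal.smul_def, Real.coe_toNNReal _ (gaussianPDFReal_nonneg 0 σ x)]
  rw [he]; exact h

lemma sigma_pos {σ : ℝ≥0} (hσ : σ ≠ 0) : 0 < (2 * (σ:ℝ))⁻¹ := by
  have : 0 < (σ : ℝ) := by positivity
  positivity

lemma gauss_integrable_id {σ : ℝ≥0} (hσ : σ ≠ 0) :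
    Integrable (fun x : ℝ => x) (gaussianReal 0 σ) := by
  refine gauss_integrable hσ _ ?_
  rw [pdf_fun_eq]
  refine Integrable.const_mul ?_ _
  simpa [neg_mul] using integrable_mul_exp_neg_mul_sq (sigma_pos hσ)

lemma gauss_integrable_sq {σ : ℝ≥0} (hσ : σ ≠ 0) :
    Integrable (fun x : ℝ => x ^ 2) (gaussianReal 0 σ) := by
  refine gauss_integrable hσ _ ?_
  rw [pdf_fun_eq]
  exact (int_sq_exp (sigma_pos hσ)).const_mul _

lemma gauss_mean {σ : ℝ≥0} (hσ : σ ≠ 0) : ∫ x, x ∂(gaussianReal 0 σ) = 0 := by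
  rw [gauss_int hσ, pdf_fun_eq, integral_const_mul, mom1 (sigma_pos hσ), mul_zero]

lemma gauss_sq {σ : ℝ≥0} (hσ : σ ≠ 0) : ∫ x, x ^ 2 ∂(gaussianReal 0 σ) = σ := by
  rw [gauss_int hσ, pdf_fun_eq, integral_const_mul, mom2 (sigma_pos hσ)]
  have h1 : (0:ℝ) < σ := by positivity
  have h2 : π / (2 * (σ:ℝ))⁻¹ = 2 * π * σ := by field_simp
  rw [h2]
  have h3 : (0:ℝ) < Real.sqrt (2 * π * σ) := Real.sqrt_pos.mpr (by positivity)
  field_simp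

end Aux

/-- For jointly independent Gaussian matrices `W^{2,i}` (size `N_e × N`,
entry variance `σ₂²`) and `W^{3,i}` (size `N × N_e`, entry variance `σ₃²`), fixed gating
weights `φ_i` and a fixed vector `v ∈ ℝ^N`, the cross-expert aggregate
`A := (1/M) Σ_i φ_i W^{3,i} W^{2,i} v` satisfies
`E[‖A‖₂²] = (1/M²) (Σ_i φ_i²) σ₂² σ₃² N N_e ‖v‖₂²`; in particular, under the MSSP
Regime II scaling `σ₂² = 1/N`, `σ₃² = M/N_e`, this equals `((1/M) Σ_i φ_i²) ‖v‖₂²`. -/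
theorem stmt_10 {Ω : Type*} [MeasurableSpace Ω] (P : Measure Ω) [IsProbabilityMeasure P]
    (M N Ne : ℕ) (hM : 0 < M) (hN : 0 < N) (hNe : 0 < Ne)
    (σ2 σ3 : ℝ≥0) (hσ2 : 0 < σ2) (hσ3 : 0 < σ3)
    (W2 : Fin M → Ω → Matrix (Fin Ne) (Fin N) ℝ)
    (W3 : Fin M → Ω → Matrix (Fin N) (Fin Ne) ℝ)
    (hmeas2 : ∀ i a b, Measurable fun ω => W2 i ω a b)
    (hmeas3 : ∀ i a b, Measurable fun ω => W3 i ω a b)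
    (hindep : iIndepFun
      (Sum.elim (fun (p : Fin M × Fin Ne × Fin N) (ω : Ω) => W2 p.1 ω p.2.1 p.2.2)
                (fun (p : Fin M × Fin N × Fin Ne) (ω : Ω) => W3 p.1 ω p.2.1 p.2.2)) P)
    (hlaw2 : ∀ i a b, Measure.map (fun ω => W2 i ω a b) P = gaussianReal 0 σ2)
    (hlaw3 : ∀ i a b, Measure.map (fun ω => W3 i ω a b) P = gaussianReal 0 σ3)
    (φ : Fin M → ℝ) (v : Fin N → ℝ) :
    (∫ ω, (∑ a, (((M : ℝ)⁻¹ • ∑ i, φ i • (W3 i ω * W2 i ω).mulVec v) a) ^ 2) ∂P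
        = ((M : ℝ) ^ 2)⁻¹ * (∑ i, φ i ^ 2) * (σ2 : ℝ) * (σ3 : ℝ) * (N : ℝ) * (Ne : ℝ)
            * ∑ j, v j ^ 2) ∧
    ((σ2 : ℝ) = 1 / (N : ℝ) → (σ3 : ℝ) = (M : ℝ) / (Ne : ℝ) →
      ∫ ω, (∑ a, (((M : ℝ)⁻¹ • ∑ i, φ i • (W3 i ω * W2 i ω).mulVec v) a) ^ 2) ∂P
        = ((M : ℝ)⁻¹ * ∑ i, φ i ^ 2) * ∑ j, v j ^ 2) := by
  classical
  set ι := (Fin M × Fin Ne × Fin N) ⊕ (Fin M × Fin N × Fin Ne) with hι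
  set X : ι → Ω → ℝ :=
    Sum.elim (fun (p : Fin M × Fin Ne × Fin N) (ω : Ω) => W2 p.1 ω p.2.1 p.2.2)
             (fun (p : Fin M × Fin N × Fin Ne) (ω : Ω) => W3 p.1 ω p.2.1 p.2.2) with hXdef
  set var : ι → ℝ≥0 := Sum.elim (fun _ => σ2) (fun _ => σ3) with hvar
  have varne : ∀ u, var u ≠ 0 := by rintro (p | p) <;> simp [hvar, hσ2.ne', hσ3.ne']
  have measX : ∀ u, Measurable (X u) := by
    rintro (⟨i, a, b⟩ | ⟨i, a, b⟩)
    · exact hmeas2 i a b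
    · exact hmeas3 i a b
  have lawX : ∀ u, Measure.map (X u) P = gaussianReal 0 (var u) := by
    rintro (⟨i, a, b⟩ | ⟨i, a, b⟩)
    · exact hlaw2 i a b
    · exact hlaw3 i a b
  have sqInt : ∀ u, Integrable (fun ω => X u ω ^ 2) P := by
    intro u
    have h := gauss_integrable_sq (varne u)
    rw [← lawX u] at h
    exact (integrable_map_measure ((measurable_id.pow_const 2).aestronglyMeasurable)
      (measX u).aemeasurable).mp h
  have memL2 : ∀ u, MemLp (X u) 2 P := fun u =>
    (memLp_two_iff_integrable_sq (measX u).aestronglyMeasurable).mpr (sqInt u)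
  have intX : ∀ u, Integrable (X u) P := fun u => (memL2 u).integrable one_le_two
  have meanX : ∀ u, ∫ ω, X u ω ∂P = 0 := by
    intro u
    have h2 : ∫ y, y ∂(Measure.map (X u) P) = ∫ ω, X u ω ∂P :=
      integral_map (f := fun y : ℝ => y) (measX u).aemeasurable aestronglyMeasurable_id
    rw [lawX u, gauss_mean (varne u)] at h2
    exact h2.symm
  have sqX : ∀ u, ∫ ω, X u ω ^ 2 ∂P = (var u : ℝ) := by
    intro u
    have h2 : ∫ y, y ^ 2 ∂(Measure.map (X u) P) = ∫ ω, X u ω ^ 2 ∂P :=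
      integral_map (f := fun y : ℝ => y ^ 2) (measX u).aemeasurable
        ((measurable_id.pow_const 2).aestronglyMeasurable)
    rw [lawX u, gauss_sq (varne u)] at h2
    exact h2.symm
  have pairInt : ∀ u u', Integrable (fun ω => X u ω * X u' ω) P := by
    intro u u'
    by_cases h : u = u'
    · subst h; simpa [pow_two] using sqInt u
    · exact (hindep.indepFun h).integrable_mul (intX u) (intX u')
  have pairE : ∀ u u', ∫ ω, X u ω * X u' ω ∂P = if u = u' then (var u : ℝ) else 0 := by
    intro u u'
    by_cases h : u = u'
    · subst h; simp only [if_pos rfl]; simpa [pow_two] using sqX u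
    · rw [if_neg h]
      have := (hindep.indepFun h).integral_mul_eq_mul_integral (intX u).1 (intX u').1
      simpa [Pi.mul_apply, meanX u, meanX u'] using this
  -- four-factor independence
  have hpair : ∀ (p q : Fin M × Fin N × Fin Ne) (r s : Fin M × Fin Ne × Fin N),
      IndepFun (fun ω => X (Sum.inr p) ω * X (Sum.inr q) ω)
        (fun ω => X (Sum.inl r) ω * X (Sum.inl s) ω) P := by
    intro p q r s
    have h := hindep.indepFun_prodMk_prodMk measX (Sum.inr p) (Sum.inr q)
      (Sum.inl r) (Sum.inl s) (by simp) (by simp) (by simp) (by simp)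
    exact h.comp (measurable_fst.mul measurable_snd) (measurable_fst.mul measurable_snd)
  have fourInt : ∀ (p q : Fin M × Fin N × Fin Ne) (r s : Fin M × Fin Ne × Fin N),
      Integrable (fun ω => (X (Sum.inr p) ω * X (Sum.inr q) ω)
        * (X (Sum.inl r) ω * X (Sum.inl s) ω)) P := by
    intro p q r s
    have := (hpair p q r s).integrable_mul (pairInt _ _) (pairInt _ _)
    exact this
  have fourE : ∀ (p q : Fin M × Fin N × Fin Ne) (r s : Fin M × Fin Ne × Fin N),
      ∫ ω, (X (Sum.inr p) ω * X (Sum.inr q) ω) * (X (Sum.inl r) ω * X (Sum.inl s) ω) ∂P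
        = (if p = q then (σ3 : ℝ) else 0) * (if r = s then (σ2 : ℝ) else 0) := by
    intro p q r s
    have h := (hpair p q r s).integral_mul_eq_mul_integral (pairInt _ _).1 (pairInt _ _).1
    have h1 : ∫ ω, X (Sum.inr p) ω * X (Sum.inr q) ω ∂P = if p = q then (σ3 : ℝ) else 0 := by
      rw [pairE]
      by_cases hpq : p = q
      · subst hpq; simp [hvar]
      · rw [if_neg (fun h => hpq (Sum.inr_injective h)), if_neg hpq]
    have h2 : ∫ ω, X (Sum.inl r) ω * X (Sum.inl s) ω ∂P = if r = s then (σ2 : ℝ) else 0 := by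
      rw [pairE]
      by_cases hrs : r = s
      · subst hrs; simp [hvar]
      · rw [if_neg (fun h => hrs (Sum.inl_injective h)), if_neg hrs]
    rw [← h1, ← h2]
    simpa [Pi.mul_apply] using h
  have inner : ∀ (ω : Ω) (a : Fin N),
      ((M : ℝ)⁻¹ • ∑ i, φ i • (W3 i ω * W2 i ω).mulVec v) a
        = (M : ℝ)⁻¹ * ∑ t : Fin M × Fin Ne × Fin N,
            (φ t.1 * v t.2.2) * (X (Sum.inr (t.1, a, t.2.1)) ω * X (Sum.inl t) ω) := by
    intro ω a
    rw [Pi.smul_apply, smul_eq_mul]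
    congr 1
    rw [Finset.sum_apply, Fintype.sum_prod_type]
    refine Finset.sum_congr rfl fun i _ => ?_
    simp only [hXdef, Sum.elim_inl, Sum.elim_inr, Pi.smul_apply, smul_eq_mul,
      Matrix.mulVec, Matrix.mul_apply, dotProduct]
    rw [Finset.mul_sum, Fintype.sum_prod_type]
    have key : (∑ j : Fin N, φ i * ((∑ e : Fin Ne, W3 i ω a e * W2 i ω e j) * v j))
        = ∑ e : Fin Ne, ∑ j : Fin N, φ i * v j * (W3 i ω a e * W2 i ω e j) := by
      rw [← Finset.sum_comm]
      refine Finset.sum_congr rfl fun j _ => ?_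
      rw [Finset.sum_mul, Finset.mul_sum]
      exact Finset.sum_congr rfl fun e _ => by ring
    exact key
  have hintegrand : ∀ ω : Ω,
      (∑ a, (((M : ℝ)⁻¹ • ∑ i, φ i • (W3 i ω * W2 i ω).mulVec v) a) ^ 2)
        = ∑ a, ∑ t : Fin M × Fin Ne × Fin N, ∑ t' : Fin M × Fin Ne × Fin N,
            ((M : ℝ) ^ 2)⁻¹ * (((φ t.1 * v t.2.2) * (φ t'.1 * v t'.2.2)) *
              ((X (Sum.inr (t.1, a, t.2.1)) ω * X (Sum.inr (t'.1, a, t'.2.1)) ω)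
                * (X (Sum.inl t) ω * X (Sum.inl t') ω))) := by
    intro ω
    refine Finset.sum_congr rfl fun a _ => ?_
    rw [inner ω a, mul_pow, inv_pow,
      pow_two (∑ t : Fin M × Fin Ne × Fin N,
        (φ t.1 * v t.2.2) * (X (Sum.inr (t.1, a, t.2.1)) ω * X (Sum.inl t) ω)),
      Finset.sum_mul_sum, Finset.mul_sum]
    refine Finset.sum_congr rfl fun t _ => ?_
    rw [Finset.mul_sum]
    refine Finset.sum_congr rfl fun t' _ => ?_
    ring
  have hint_each : ∀ (a : Fin N) (t t' : Fin M × Fin Ne × Fin N),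
      Integrable (fun ω => ((M : ℝ) ^ 2)⁻¹ * (((φ t.1 * v t.2.2) * (φ t'.1 * v t'.2.2)) *
        ((X (Sum.inr (t.1, a, t.2.1)) ω * X (Sum.inr (t'.1, a, t'.2.1)) ω)
          * (X (Sum.inl t) ω * X (Sum.inl t') ω)))) P :=
    fun a t t' => ((fourInt _ _ _ _).const_mul _).const_mul _
  have hEq : (∫ ω, (∑ a, (((M : ℝ)⁻¹ • ∑ i, φ i • (W3 i ω * W2 i ω).mulVec v) a) ^ 2) ∂P)
      = ∑ a : Fin N, ∑ t : Fin M × Fin Ne × Fin N, ∑ t' : Fin M × Fin Ne × Fin N,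
          ((M : ℝ) ^ 2)⁻¹ * (((φ t.1 * v t.2.2) * (φ t'.1 * v t'.2.2)) *
            ((if ((t.1, a, t.2.1) : Fin M × Fin N × Fin Ne) = (t'.1, a, t'.2.1)
                then (σ3 : ℝ) else 0) * (if t = t' then (σ2 : ℝ) else 0))) := by
    rw [integral_congr_ae (ae_of_all _ hintegrand)]
    rw [integral_finset_sum _ (fun a _ => integrable_finset_sum _
      (fun t _ => integrable_finset_sum _ (fun t' _ => hint_each a t t')))]
    refine Finset.sum_congr rfl fun a _ => ?_
    rw [integral_finset_sum _ (fun t _ => integrable_finset_sum _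
      (fun t' _ => hint_each a t t'))]
    refine Finset.sum_congr rfl fun t _ => ?_
    rw [integral_finset_sum _ (fun t' _ => hint_each a t t')]
    refine Finset.sum_congr rfl fun t' _ => ?_
    rw [integral_const_mul, integral_const_mul, fourE]
  have hval : ∀ (a : Fin N) (t t' : Fin M × Fin Ne × Fin N),
      ((M : ℝ) ^ 2)⁻¹ * (((φ t.1 * v t.2.2) * (φ t'.1 * v t'.2.2)) *
        ((if ((t.1, a, t.2.1) : Fin M × Fin N × Fin Ne) = (t'.1, a, t'.2.1)
            then (σ3 : ℝ) else 0) * (if t = t' then (σ2 : ℝ) else 0)))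
      = if t = t' then ((M : ℝ) ^ 2)⁻¹ * (φ t.1 ^ 2 * v t.2.2 ^ 2 * (σ3 : ℝ) * (σ2 : ℝ))
          else 0 := by
    intro a t t'
    by_cases h : t = t'
    · subst h
      rw [if_pos rfl, if_pos rfl, if_pos rfl]
      ring
    · simp [h]
  have hpart1 : (∫ ω, (∑ a, (((M : ℝ)⁻¹ • ∑ i, φ i • (W3 i ω * W2 i ω).mulVec v) a) ^ 2) ∂P)
      = ((M : ℝ) ^ 2)⁻¹ * (∑ i, φ i ^ 2) * (σ2 : ℝ) * (σ3 : ℝ) * (N : ℝ) * (Ne : ℝ)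
          * ∑ j, v j ^ 2 := by
    rw [hEq]
    have h2 : ∀ (a : Fin N) (t : Fin M × Fin Ne × Fin N),
        (∑ t' : Fin M × Fin Ne × Fin N,
          ((M : ℝ) ^ 2)⁻¹ * (((φ t.1 * v t.2.2) * (φ t'.1 * v t'.2.2)) *
            ((if ((t.1, a, t.2.1) : Fin M × Fin N × Fin Ne) = (t'.1, a, t'.2.1)
                then (σ3 : ℝ) else 0) * (if t = t' then (σ2 : ℝ) else 0))))
        = ((M : ℝ) ^ 2)⁻¹ * (φ t.1 ^ 2 * v t.2.2 ^ 2 * (σ3 : ℝ) * (σ2 : ℝ)) := by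
      intro a t
      rw [Finset.sum_congr rfl fun t' _ => hval a t t']
      simp
    have hsum : (∑ t : Fin M × Fin Ne × Fin N,
        ((M : ℝ) ^ 2)⁻¹ * (φ t.1 ^ 2 * v t.2.2 ^ 2 * (σ3 : ℝ) * (σ2 : ℝ)))
        = ((M : ℝ) ^ 2)⁻¹ * (σ3 : ℝ) * (σ2 : ℝ) * (Ne : ℝ)
            * ((∑ i, φ i ^ 2) * ∑ j, v j ^ 2) := by
      simp only [Fintype.sum_prod_type]
      have hin : ∀ i : Fin M, (∑ e : Fin Ne, ∑ j : Fin N,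
          ((M : ℝ) ^ 2)⁻¹ * (φ i ^ 2 * v j ^ 2 * (σ3 : ℝ) * (σ2 : ℝ)))
          = (((M : ℝ) ^ 2)⁻¹ * (σ3 : ℝ) * (σ2 : ℝ) * (Ne : ℝ) * ∑ j, v j ^ 2) * φ i ^ 2 := by
        intro i
        have hj : (∑ j : Fin N, ((M : ℝ) ^ 2)⁻¹ * (φ i ^ 2 * v j ^ 2 * (σ3 : ℝ) * (σ2 : ℝ)))
            = (((M : ℝ) ^ 2)⁻¹ * (σ3 : ℝ) * (σ2 : ℝ) * φ i ^ 2) * ∑ j, v j ^ 2 := by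
          rw [Finset.mul_sum]
          exact Finset.sum_congr rfl fun j _ => by ring
        rw [Finset.sum_congr rfl fun (e : Fin Ne) _ => hj, Finset.sum_const,
          Finset.card_univ, Fintype.card_fin, nsmul_eq_mul]
        ring
      rw [Finset.sum_congr rfl fun (i : Fin M) _ => hin i, ← Finset.mul_sum]
      ring
    rw [Finset.sum_congr rfl fun (a : Fin N) _ =>
        (Finset.sum_congr rfl fun (t : Fin M × Fin Ne × Fin N) _ => h2 a t),
      Finset.sum_congr rfl fun (a : Fin N) _ => hsum, Finset.sum_const,
      Finset.card_univ, Fintype.card_fin, nsmul_eq_mul]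
    ring
  refine ⟨hpart1, fun hs2 hs3 => ?_⟩
  rw [hpart1, hs2, hs3]
  have hMne : (M : ℝ) ≠ 0 := Nat.cast_ne_zero.mpr hM.ne'
  have hNne : (N : ℝ) ≠ 0 := Nat.cast_ne_zero.mpr hN.ne'
  have hNene : (Ne : ℝ) ≠ 0 := Nat.cast_ne_zero.mpr hNe.ne'
  field_simp
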